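/- Let ξ = Σ_{k=1}^{N} (−1)^{p̄_k}. For every λ ∈ ℤ^N, every r ∈ ℤ/pℤ, and all 1 ≤ i < j ≤ N: (i, j) is an r-canceling pair for λ (with respect to the parity sequence p̄) if and only if (w₀(j), w₀(i)) is an (r − ξ)-canceling pair for s̃(λ) (with respect to the opposite parity sequence p̄′). -/
import Mathlib


namespace Kujawa

open Finset

variable {n : ℕ}

/-- The sign `(−1)^{p̄ i}` attached to the parity sequence `pb`. -/
def sg (pb : Fin (n + 1) → ZMod 2) (i : Fin (n + 1)) : ℤ :=
  if pb i = 0 then 1 else -1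

/-- `ϑ_j = ∑_{i > j} (−1)^{p̄_i + p̄_j}`. -/
def theta (pb : Fin (n + 1) → ZMod 2) (j : Fin (n + 1)) : ℤ :=
  ∑ i ∈ Finset.Ioi j, sg pb i * sg pb j

/-- The standard basis vector `ε_i` of `X(T) = ℤ^N`. -/
def eps (i : Fin (n + 1)) : Fin (n + 1) → ℤ := fun j => if j = i then 1 else 0

/-- The `j`-th residue `r_j(λ) = (λ + ϑ, ε_j)`. -/
def res (pb : Fin (n + 1) → ZMod 2) (l : Fin (n + 1) → ℤ) (j : Fin (n + 1)) : ℤ :=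
  sg pb j * (l j + theta pb j)

/-- `ρ = ϑ + ∑_{i : p̄_i = 0} ε_i`, coordinatewise. -/
def rho (pb : Fin (n + 1) → ZMod 2) (k : Fin (n + 1)) : ℤ :=
  theta pb k + (if pb k = 0 then 1 else 0)

/-- `l(λ) = ∑ λ_i`. -/
def ell (l : Fin (n + 1) → ℤ) : ℤ := ∑ i, l i

/-- The central character value `Z_r(λ)`. -/
def Zint (pb : Fin (n + 1) → ZMod 2) (r : ℕ) (l : Fin (n + 1) → ℤ) : ℤ :=
  ∑ s ∈ Finset.Icc 1 r, (-1 : ℤ) ^ (s - 1) *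
    ∑ K ∈ Finset.powersetCard s (Finset.univ : Finset (Fin (n + 1))),
      ∑ a ∈ Fintype.piFinset (fun _ : Fin (n + 1) => Finset.range (r + 2)),
        if (∑ k ∈ K, a k) = r - s + 1 ∧ (∀ k, k ∉ K → a k = 0) then
          (∏ k ∈ K, sg pb k) * ∏ k ∈ K, res pb l k ^ a k
        else 0

/-- `A_r(λ) = #{i : r_i(λ+ε_i) ≡ r (mod p)}`. -/
def Acount (pb : Fin (n + 1) → ZMod 2) (p : ℕ) (r : ZMod p) (l : Fin (n + 1) → ℤ) : ℕ :=
  (Finset.univ.filter fun i : Fin (n + 1) => ((res pb (l + eps i) i : ℤ) : ZMod p) = r).card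

/-- `B_r(λ) = #{i : r_i(λ) ≡ r (mod p)}`. -/
def Bcount (pb : Fin (n + 1) → ZMod 2) (p : ℕ) (r : ZMod p) (l : Fin (n + 1) → ℤ) : ℕ :=
  (Finset.univ.filter fun i : Fin (n + 1) => ((res pb l i : ℤ) : ZMod p) = r).card

/-- For `p = 0`: `γ_a` is the basis element `single a 1` of the free module `ℤ →₀ ℤ`. -/
noncomputable def gamma0 (a : ℤ) : ℤ →₀ ℤ := Finsupp.single a 1

/-- `wt` for `p = 0`, with values in the free `ℤ`-module on basis `{γ_a : a ∈ ℤ}`. -/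
noncomputable def wt0 (pb : Fin (n + 1) → ZMod 2) (l : Fin (n + 1) → ℤ) : ℤ →₀ ℤ :=
  ∑ i : Fin (n + 1), sg pb i • gamma0 (sg pb i * (l i + rho pb i))

/-- `Λ_r ∈ P = ℤδ ⊕ ⊕_{r ∈ ℤ/pℤ} ℤΛ_r`. -/
def LamP (p : ℕ) (r : ZMod p) : ℤ × (ZMod p → ℤ) := (0, fun s => if s = r then 1 else 0)

/-- `δ ∈ P`. -/
def delP (p : ℕ) : ℤ × (ZMod p → ℤ) := (1, 0)

/-- `γ_a = Λ_{s mod p} − Λ_{(s−1) mod p} − d·δ`, where `a = p·d + s` with `1 ≤ s ≤ p`. -/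
def gammaP (p : ℕ) (a : ℤ) : ℤ × (ZMod p → ℤ) :=
  LamP p (((a - 1) % (p : ℤ) + 1 : ℤ) : ZMod p) - LamP p (((a - 1) % (p : ℤ) : ℤ) : ZMod p) -
    ((a - 1) / (p : ℤ)) • delP p

/-- `wt` for prime `p`. -/
def wtP (p : ℕ) (pb : Fin (n + 1) → ZMod 2) (l : Fin (n + 1) → ℤ) : ℤ × (ZMod p → ℤ) :=
  ∑ i : Fin (n + 1), sg pb i • gammaP p (sg pb i * (l i + rho pb i))

/-- Entry `i` of the `r`-signature of `λ`: `1` codes `+`, `-1` codes `−`, `0` codes `0`. -/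
def sig (pb : Fin (n + 1) → ZMod 2) (p : ℕ) (r : ZMod p) (l : Fin (n + 1) → ℤ)
    (i : Fin (n + 1)) : ℤ :=
  if ((res pb (l + eps i) i : ℤ) : ZMod p) = r then 1
  else if ((res pb l i : ℤ) : ZMod p) = r then -1
  else 0

/-- Number of `−`'s of the `r`-signature of `λ` in positions `[i..j]`. -/
noncomputable def nM (pb : Fin (n + 1) → ZMod 2) (p : ℕ) (r : ZMod p) (l : Fin (n + 1) → ℤ)
    (i j : Fin (n + 1)) : ℕ :=
  Set.ncard {k : Fin (n + 1) | k ∈ Finset.Icc i j ∧ sig pb p r l k = -1}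

/-- Number of `+`'s of the `r`-signature of `λ` in positions `[i..j]`. -/
noncomputable def nP (pb : Fin (n + 1) → ZMod 2) (p : ℕ) (r : ZMod p) (l : Fin (n + 1) → ℤ)
    (i j : Fin (n + 1)) : ℕ :=
  Set.ncard {k : Fin (n + 1) | k ∈ Finset.Icc i j ∧ sig pb p r l k = 1}

/-- `i` is the position of a `−` in the reduced `r`-signature of `λ` (i.e. `i` is
`r`-normal for `λ`): the `−` at `i` is never cancelled, which happens exactly when every
interval `[i..j]` contains strictly more `−`'s than `+`'s. -/
def RMinus (pb : Fin (n + 1) → ZMod 2) (p : ℕ) (r : ZMod p) (l : Fin (n + 1) → ℤ)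
    (i : Fin (n + 1)) : Prop :=
  sig pb p r l i = -1 ∧ ∀ j : Fin (n + 1), i ≤ j → nP pb p r l i j < nM pb p r l i j

/-- `i` is the position of a `+` in the reduced `r`-signature of `λ` (i.e. `i` is
`r`-conormal for `λ`). -/
def RPlus (pb : Fin (n + 1) → ZMod 2) (p : ℕ) (r : ZMod p) (l : Fin (n + 1) → ℤ)
    (i : Fin (n + 1)) : Prop :=
  sig pb p r l i = 1 ∧ ∀ j : Fin (n + 1), j ≤ i → nM pb p r l j i < nP pb p r l j i

/-- `i` is the position of the leftmost `−` in the reduced `r`-signature (`r`-good). -/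
def RGood (pb : Fin (n + 1) → ZMod 2) (p : ℕ) (r : ZMod p) (l : Fin (n + 1) → ℤ)
    (i : Fin (n + 1)) : Prop :=
  RMinus pb p r l i ∧ ∀ j : Fin (n + 1), j < i → ¬ RMinus pb p r l j

/-- `i` is the position of the rightmost `+` in the reduced `r`-signature (`r`-cogood). -/
def RCogood (pb : Fin (n + 1) → ZMod 2) (p : ℕ) (r : ZMod p) (l : Fin (n + 1) → ℤ)
    (i : Fin (n + 1)) : Prop :=
  RPlus pb p r l i ∧ ∀ j : Fin (n + 1), i < j → ¬ RPlus pb p r l j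

open Classical in
/-- The crystal operator `ẽ*_r`, with `none` playing the role of `0`. -/
noncomputable def eStar (pb : Fin (n + 1) → ZMod 2) (p : ℕ) (r : ZMod p)
    (l : Fin (n + 1) → ℤ) : Option (Fin (n + 1) → ℤ) :=
  if h : (Finset.univ.filter (RMinus pb p r l)).Nonempty then
    some (l - eps ((Finset.univ.filter (RMinus pb p r l)).min' h))
  else none

open Classical in
/-- The crystal operator `f̃*_r`, with `none` playing the role of `0`. -/
noncomputable def fStar (pb : Fin (n + 1) → ZMod 2) (p : ℕ) (r : ZMod p)
    (l : Fin (n + 1) → ℤ) : Option (Fin (n + 1) → ℤ) :=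
  if h : (Finset.univ.filter (RPlus pb p r l)).Nonempty then
    some (l + eps ((Finset.univ.filter (RPlus pb p r l)).max' h))
  else none

/-- `A ↓ B`: there is an injection `θ : A → B` with `θ a ≤ a` for all `a ∈ A`. -/
def Down (A B : Finset (Fin (n + 1))) : Prop :=
  ∃ θ : Fin (n + 1) → Fin (n + 1), Set.InjOn θ ↑A ∧ ∀ a ∈ A, θ a ∈ B ∧ θ a ≤ a

/-- `C_{i,j}(λ) = {h ∈ (i..j) : c_{i,h}(λ) ≡ 0 (mod p)}`. -/
def Cset (pb : Fin (n + 1) → ZMod 2) (p : ℕ) (l : Fin (n + 1) → ℤ) (i j : Fin (n + 1)) :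
    Finset (Fin (n + 1)) :=
  (Finset.Ioo i j).filter fun h => ((res pb l i - res pb l h : ℤ) : ZMod p) = 0

/-- `B_{i,j}(λ) = {h ∈ [i..j) : b_{i,h}(λ) ≡ 0 (mod p)}`. -/
def Bset (pb : Fin (n + 1) → ZMod 2) (p : ℕ) (l : Fin (n + 1) → ℤ) (i j : Fin (n + 1)) :
    Finset (Fin (n + 1)) :=
  (Finset.Ico i j).filter fun h =>
    ((res pb l i - res pb (l + eps (h + 1)) (h + 1) : ℤ) : ZMod p) = 0

/-- The opposite parity sequence `p̄′_k = p̄_{w₀ k} + 1̄`, where `w₀ k = N + 1 − k`. -/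
def pbRev (pb : Fin (n + 1) → ZMod 2) : Fin (n + 1) → ZMod 2 := fun k => pb k.rev + 1

/-- `s̃ : ℤ^N → ℤ^N`, `(s̃ λ)_{w₀ i} = −λ_i`. -/
def stilde (l : Fin (n + 1) → ℤ) : Fin (n + 1) → ℤ := fun k => -l k.rev

/-- `(i, j)` is an `r`-canceling pair for `λ` (for `i < j`). -/
def CPair (pb : Fin (n + 1) → ZMod 2) (p : ℕ) (r : ZMod p) (l : Fin (n + 1) → ℤ)
    (i j : Fin (n + 1)) : Prop :=
  sig pb p r l i = -1 ∧ sig pb p r l j = 1 ∧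
    ∀ k : Fin (n + 1), i < k → k < j → sig pb p r l k = 0

/-- `(i i+1)·λ`: interchange coordinates `i` and `i+1`. -/
def swapL (i : Fin (n + 1)) (l : Fin (n + 1) → ℤ) : Fin (n + 1) → ℤ :=
  fun k => if k = i then l (i + 1) else if k = i + 1 then l i else l k

/-- The parity sequence obtained from `pb` by interchanging entries `i` and `i+1`. -/
def pbSwap (pb : Fin (n + 1) → ZMod 2) (i : Fin (n + 1)) : Fin (n + 1) → ZMod 2 :=
  fun k => if k = i then pb (i + 1) else if k = i + 1 then pb i else pb k

/-- The odd reflection `s_i` on `X(T)`. -/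
def sI (pb : Fin (n + 1) → ZMod 2) (p : ℕ) (i : Fin (n + 1)) (l : Fin (n + 1) → ℤ) :
    Fin (n + 1) → ℤ :=
  if ((sg pb i * l i - sg pb (i + 1) * l (i + 1) : ℤ) : ZMod p) = 0 then swapL i l
  else swapL i l + eps i - eps (i + 1)

lemma sg_sq (pb : Fin (n + 1) → ZMod 2) (i : Fin (n + 1)) : sg pb i * sg pb i = 1 := by
  unfold sg; split <;> norm_num

lemma sg_rev (pb : Fin (n + 1) → ZMod 2) (k : Fin (n + 1)) :
    sg (pbRev pb) k = - sg pb k.rev := by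
  unfold sg pbRev
  rcases (by decide : ∀ x : ZMod 2, x = 0 ∨ x = 1) (pb k.rev) with h | h <;>
    simp [h] <;> decide

lemma res_add_eps (pb : Fin (n + 1) → ZMod 2) (l : Fin (n + 1) → ℤ) (j : Fin (n + 1)) :
    res pb (l + eps j) j = res pb l j + sg pb j := by
  unfold res eps
  simp only [Pi.add_apply, if_pos rfl, if_true]
  ring

lemma ioi_rev (j : Fin (n + 1)) :
    Finset.Ioi j.rev = Finset.map ⟨Fin.rev, Fin.rev_injective⟩ (Finset.Iio j) := by
  ext a
  simp only [Finset.mem_Ioi, Finset.mem_map, Finset.mem_Iio, Function.Embedding.coeFn_mk]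
  constructor
  · intro h
    refine ⟨a.rev, ?_, Fin.rev_rev a⟩
    simp only [Fin.lt_def, Fin.val_rev] at h ⊢
    omega
  · rintro ⟨b, hb, rfl⟩
    simp only [Fin.lt_def, Fin.val_rev] at hb ⊢
    omega

lemma res_rev (pb : Fin (n + 1) → ZMod 2) (lam : Fin (n + 1) → ℤ) (j : Fin (n + 1)) :
    res (pbRev pb) (stilde lam) j.rev
      = res pb lam j + sg pb j - ∑ k : Fin (n + 1), sg pb k := by
  have hth : theta (pbRev pb) j.rev = ∑ i ∈ Finset.Iio j, sg pb i * sg pb j := by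
    unfold theta
    rw [ioi_rev, Finset.sum_map]
    refine Finset.sum_congr rfl fun i _ => ?_
    simp only [Function.Embedding.coeFn_mk, sg_rev, Fin.rev_rev]
    ring
  have hsplit : ∑ k : Fin (n + 1), sg pb k
      = (∑ i ∈ Finset.Iio j, sg pb i) + (sg pb j + ∑ i ∈ Finset.Ioi j, sg pb i) := by
    have hu : Finset.Iio j ∪ Finset.Ici j = Finset.univ := by
      ext a; simp [Finset.mem_union, lt_or_ge a j]
    have hd : Disjoint (Finset.Iio j) (Finset.Ici j) := by
      rw [Finset.disjoint_left]
      intro a ha hb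
      simp only [Finset.mem_Iio] at ha
      simp only [Finset.mem_Ici] at hb
      exact absurd hb (not_le.mpr ha)
    rw [← hu, Finset.sum_union hd, ← Finset.Ioi_insert,
      Finset.sum_insert (by simp)]
  unfold res stilde
  rw [hth]
  simp only [Fin.rev_rev, sg_rev, hsplit]
  unfold theta
  have h1 : (∑ i ∈ Finset.Iio j, sg pb i * sg pb j) * sg pb j
      = ∑ i ∈ Finset.Iio j, sg pb i := by
    rw [← Finset.sum_mul, mul_assoc, sg_sq, mul_one]
  have h2 : (∑ i ∈ Finset.Ioi j, sg pb i * sg pb j) * sg pb j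
      = ∑ i ∈ Finset.Ioi j, sg pb i := by
    rw [← Finset.sum_mul, mul_assoc, sg_sq, mul_one]
  have h3 := sg_sq pb j
  nlinarith [h1, h2, h3]

lemma one_ne_zero_zmod (p : ℕ) (hp : p = 0 ∨ p.Prime) : (1 : ZMod p) ≠ 0 := by
  rcases hp with rfl | hp
  · exact one_ne_zero
  · haveI : Fact (1 < p) := ⟨hp.one_lt⟩
    exact one_ne_zero

lemma sg_cast_ne (p : ℕ) (hp : p = 0 ∨ p.Prime) (pb : Fin (n + 1) → ZMod 2)
    (j : Fin (n + 1)) : ((sg pb j : ℤ) : ZMod p) ≠ 0 := by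
  have h1 := one_ne_zero_zmod p hp
  unfold sg
  split
  · simpa using h1
  · push_cast
    simpa using neg_ne_zero.mpr h1

lemma sig_rev (p : ℕ) (hp : p = 0 ∨ p.Prime) (pb : Fin (n + 1) → ZMod 2)
    (lam : Fin (n + 1) → ℤ) (r : ZMod p) (j : Fin (n + 1)) :
    sig (pbRev pb) p (r - ((∑ k : Fin (n + 1), sg pb k : ℤ) : ZMod p)) (stilde lam) j.rev
      = - sig pb p r lam j := by
  set c : ZMod p := ((∑ k : Fin (n + 1), sg pb k : ℤ) : ZMod p) with hc
  have hA : ((res (pbRev pb) (stilde lam + eps j.rev) j.rev : ℤ) : ZMod p)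
      = ((res pb lam j : ℤ) : ZMod p) - c := by
    rw [res_add_eps, res_rev, sg_rev, Fin.rev_rev, hc]
    push_cast
    ring
  have hB : ((res (pbRev pb) (stilde lam) j.rev : ℤ) : ZMod p)
      = ((res pb (lam + eps j) j : ℤ) : ZMod p) - c := by
    rw [res_rev, res_add_eps, hc]
    push_cast
    ring
  have hab : ((res pb (lam + eps j) j : ℤ) : ZMod p)
      = ((res pb lam j : ℤ) : ZMod p) + ((sg pb j : ℤ) : ZMod p) := by
    rw [res_add_eps]; push_cast; ring
  have hex : ¬(((res pb lam j : ℤ) : ZMod p) = r ∧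
      ((res pb (lam + eps j) j : ℤ) : ZMod p) = r) := by
    rintro ⟨h1, h2⟩
    rw [hab, h1] at h2
    exact sg_cast_ne p hp pb j (by linear_combination h2)
  unfold sig
  rw [hA, hB]
  simp only [sub_left_inj]
  by_cases h1 : ((res pb lam j : ℤ) : ZMod p) = r <;>
    by_cases h2 : ((res pb (lam + eps j) j : ℤ) : ZMod p) = r
  · exact absurd ⟨h1, h2⟩ hex
  · simp [h1, h2]
  · simp [h1, h2]
  · simp [h1, h2]


/-- with `ξ = Σ_k (−1)^{p̄_k}`, `(i, j)` is an `r`-canceling pair for `λ`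
iff `(w₀ j, w₀ i)` is an `(r − ξ)`-canceling pair for `s̃ λ` w.r.t. `p̄′`. -/
theorem statement12 (p : ℕ) (hp : p = 0 ∨ p.Prime) (pb : Fin (n + 1) → ZMod 2)
    (lam : Fin (n + 1) → ℤ) (r : ZMod p) (i j : Fin (n + 1)) (hij : i < j) :
    CPair pb p r lam i j ↔
      CPair (pbRev pb) p (r - ((∑ k : Fin (n + 1), sg pb k : ℤ) : ZMod p)) (stilde lam)
        j.rev i.rev := by
  unfold CPair
  have hrev : ∀ k : Fin (n + 1),
      sig (pbRev pb) p (r - ((∑ k : Fin (n + 1), sg pb k : ℤ) : ZMod p)) (stilde lam) k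
        = - sig pb p r lam k.rev := by
    intro k
    rw [← sig_rev p hp pb lam r k.rev, Fin.rev_rev]
  constructor
  · rintro ⟨h1, h2, h3⟩
    refine ⟨by rw [hrev, Fin.rev_rev, h2], by rw [hrev, Fin.rev_rev, h1]; ring, ?_⟩
    intro k hk1 hk2
    rw [hrev]
    have : sig pb p r lam k.rev = 0 := by
      refine h3 k.rev ?_ ?_ <;>
        · simp only [Fin.lt_def, Fin.val_rev] at hk1 hk2 ⊢
          omega
    rw [this]; ring
  · rintro ⟨h1, h2, h3⟩
    rw [hrev, Fin.rev_rev] at h1 h2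
    refine ⟨by linarith, by linarith, ?_⟩
    intro k hk1 hk2
    have := h3 k.rev (by simp only [Fin.lt_def, Fin.val_rev] at hk1 hk2 ⊢; omega)
      (by simp only [Fin.lt_def, Fin.val_rev] at hk1 hk2 ⊢; omega)
    rw [hrev, Fin.rev_rev] at this
    linarith


end Kujawa
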